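/- arXiv:1804.03686 — 2 statements merged into one kernel-verified Lean document; each statement's English description precedes it below -/
import Mathlib

section
/- Let A be a centrosymmetric r×c matrix with entries in {0,1,−1}. Then the geometric grid class Geom(A) is rc-invariant, and moreover every permutation π of size n in Geom(A) is contained in some centrosymmetric permutation ρ of size 2n in Geom(A). -/
open Filter Topology

/-- `π` contains `σ` as a pattern. -/
def PermContains {n m : ℕ} (π : Equiv.Perm (Fin n)) (σ : Equiv.Perm (Fin m)) : Prop :=
  ∃ f : Fin m → Fin n, StrictMono f ∧ ∀ i j : Fin m, σ i < σ j ↔ π (f i) < π (f j)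

/-- A permutation class: downward closed under pattern containment. -/
def IsPermClass (C : ∀ n : ℕ, Set (Equiv.Perm (Fin n))) : Prop :=
  ∀ (m n : ℕ) (σ : Equiv.Perm (Fin m)) (π : Equiv.Perm (Fin n)),
    π ∈ C n → PermContains π σ → σ ∈ C m

/-- The reverse–complement of a permutation. -/
def rcPerm {n : ℕ} (π : Equiv.Perm (Fin n)) : Equiv.Perm (Fin n) :=
  (Fin.revPerm.trans π).trans Fin.revPerm

/-- A class is rc-invariant if `rc(C) = C`. -/
def RCInvariant (C : ∀ n : ℕ, Set (Equiv.Perm (Fin n))) : Prop :=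
  ∀ n : ℕ, rcPerm '' (C n) = C n

/-- `|C_n|`. -/
noncomputable def classCount (C : ∀ n : ℕ, Set (Equiv.Perm (Fin n))) (n : ℕ) : ℕ :=
  (C n).ncard

/-- `|C^rc_{2n}|`, the number of centrosymmetric permutations of size `2n` in `C`. -/
noncomputable def rcCount (C : ∀ n : ℕ, Set (Equiv.Perm (Fin n))) (n : ℕ) : ℕ :=
  {π ∈ C (2 * n) | rcPerm π = π}.ncard

/-- The sequence `n ↦ (f n)^(1/n)`, valued in `ℝ≥0∞`. -/
noncomputable def growthSeq (f : ℕ → ℕ) (n : ℕ) : ENNReal :=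
  (f n : ENNReal) ^ ((n : ℝ)⁻¹)

/-- The standard figure of a `{0,1,-1}`-matrix `A` (rows indexed from the bottom,
both rows and columns 0-indexed here). -/
def stdFigure {r c : ℕ} (A : Fin r → Fin c → ℤ) : Set (ℝ × ℝ) :=
  { p | ∃ (i : Fin r) (j : Fin c) (t : ℝ), 0 < t ∧ t < 1 ∧
      ((A i j = 1 ∧ p = ((j : ℝ) + t, (i : ℝ) + t)) ∨
       (A i j = -1 ∧ p = ((j : ℝ) + t, (i : ℝ) + 1 - t))) }

/-- `π` lies in the geometric grid class of `A`. -/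
def InGeom {r c n : ℕ} (A : Fin r → Fin c → ℤ) (π : Equiv.Perm (Fin n)) : Prop :=
  ∃ p : Fin n → ℝ × ℝ, (∀ k, p k ∈ stdFigure A) ∧
    StrictMono (fun k => (p k).1) ∧
    ∀ k l : Fin n, (p k).2 < (p l).2 ↔ π k < π l

/-- Two cells are related if both are nonzero, they share a row or a column, and no
nonzero cell lies strictly between them in that row or column. -/
def cellRel {r c : ℕ} (A : Fin r → Fin c → ℤ) (v w : Fin r × Fin c) : Prop :=
  A v.1 v.2 ≠ 0 ∧ A w.1 w.2 ≠ 0 ∧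
    ((v.1 = w.1 ∧ ∀ j : Fin c, min v.2 w.2 < j → j < max v.2 w.2 → A v.1 j = 0) ∨
     (v.2 = w.2 ∧ ∀ i : Fin r, min v.1 w.1 < i → i < max v.1 w.1 → A i v.2 = 0))

/-- The cell graph of `A`. -/
def cellGraph {r c : ℕ} (A : Fin r → Fin c → ℤ) : SimpleGraph (Fin r × Fin c) :=
  SimpleGraph.fromRel (cellRel A)

/-- The half-turn rotation acting on cells. -/
def cellRC {r c : ℕ} (v : Fin r × Fin c) : Fin r × Fin c :=
  (v.1.rev, v.2.rev)

-- helpers already checked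
lemma evAffLt (u1 v1 u2 v2 : ℝ) (h : u1 < u2) :
    ∀ᶠ ε in 𝓝[>] (0:ℝ), u1 + ε * v1 < u2 + ε * v2 := by
  have hcont : ∀ u v : ℝ, Filter.Tendsto (fun ε : ℝ => u + ε * v) (𝓝[>] (0:ℝ)) (𝓝 u) := by
    intro u v
    have hc : Continuous (fun ε : ℝ => u + ε * v) := by continuity
    have h2 := (hc.tendsto (0:ℝ)).mono_left (nhdsWithin_le_nhds (s := Set.Ioi (0:ℝ)))
    simpa using h2
  exact (hcont u1 v1).eventually_lt (hcont u2 v2) h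

lemma evAffNe (u1 v1 u2 v2 : ℝ) (h : u1 ≠ u2 ∨ v1 ≠ v2) :
    ∀ᶠ ε in 𝓝[>] (0:ℝ), u1 + ε * v1 ≠ u2 + ε * v2 := by
  by_cases hu : u1 = u2
  · rcases h with h | h
    · exact absurd hu h
    · filter_upwards [self_mem_nhdsWithin] with ε hε heq
      have hε0 : (0:ℝ) < ε := hε
      apply h
      have : ε * v1 = ε * v2 := by rw [hu] at heq; linarith
      exact mul_left_cancel₀ hε0.ne' this
  · rcases lt_or_gt_of_ne hu with h' | h'
    · exact (evAffLt u1 v1 u2 v2 h').mono fun ε h => h.ne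
    · exact (evAffLt u2 v2 u1 v1 h').mono fun ε h => h.ne'

lemma fracEq (a b : ℕ) (s u : ℝ) (hs0 : 0 < s) (hs1 : s < 1) (hu0 : 0 < u) (hu1 : u < 1)
    (h : (a:ℝ) + s = (b:ℝ) + u) : a = b ∧ s = u := by
  have h1 : (a:ℝ) < (b:ℝ) + 1 := by linarith
  have h2 : (b:ℝ) < (a:ℝ) + 1 := by linarith
  have h1' : a < b + 1 := by exact_mod_cast h1
  have h2' : b < a + 1 := by exact_mod_cast h2
  have hab : a = b := by omega
  refine ⟨hab, ?_⟩
  rw [hab] at h; linarith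

lemma permStrictMono_eq_id {N : ℕ} (σ : Equiv.Perm (Fin N)) (h : StrictMono ⇑σ) :
    ∀ k, σ k = k := by
  have hr : Set.range ⇑σ = Set.range (id : Fin N → Fin N) := by
    simp [Equiv.range_eq_univ, Set.range_id]
  have hwf : WellFoundedLT (Fin N) := inferInstance
  have h2 := (@StrictMono.range_inj (Fin N) (Fin N) _ _ hwf _ _ h strictMono_id).mp hr
  intro k; exact congrFun h2 k

lemma existsSorted {N : ℕ} (q : Fin N → ℝ × ℝ)
    (hx : Function.Injective fun k => (q k).1)
    (hy : Function.Injective fun k => (q k).2) :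
    ∃ (ρ e : Equiv.Perm (Fin N)), StrictMono (fun k => (q (e k)).1) ∧
      ∀ k l, ((q (e k)).2 < (q (e l)).2 ↔ ρ k < ρ l) := by
  set X : Fin N → ℝ := fun k => (q k).1 with hX
  set e := Tuple.sort X with he
  have hXs : StrictMono (X ∘ e) :=
    (Tuple.monotone_sort X).strictMono_of_injective (hx.comp e.injective)
  set Y : Fin N → ℝ := fun k => (q (e k)).2 with hY
  set τ := Tuple.sort Y with hτ
  have hYinj : Function.Injective Y := hy.comp e.injective
  have hYs : StrictMono (Y ∘ τ) :=
    (Tuple.monotone_sort Y).strictMono_of_injective (hYinj.comp τ.injective)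
  refine ⟨τ⁻¹, e, hXs, fun k l => ?_⟩
  have hk : Y k = (Y ∘ τ) (τ⁻¹ k) := by simp
  have hl : Y l = (Y ∘ τ) (τ⁻¹ l) := by simp
  change Y k < Y l ↔ _
  rw [hk, hl, hYs.lt_iff_lt]

def rcPt (r c : ℕ) (p : ℝ × ℝ) : ℝ × ℝ := ((c : ℝ) - p.1, (r : ℝ) - p.2)

lemma rcPt_invol (r c : ℕ) (p : ℝ × ℝ) : rcPt r c (rcPt r c p) = p := by
  simp [rcPt]

lemma revCast {m : ℕ} (i : Fin m) : ((i.rev : ℕ) : ℝ) = (m : ℝ) - 1 - (i : ℝ) := by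
  have hi : (i:ℕ) + 1 ≤ m := i.2
  rw [Fin.val_rev, Nat.cast_sub hi]
  push_cast
  ring

lemma rcPerm_apply {n : ℕ} (π : Equiv.Perm (Fin n)) (k : Fin n) :
    rcPerm π k = (π k.rev).rev := rfl

lemma rcPt_mem {r c : ℕ} {A : Fin r → Fin c → ℤ} (hsym : ∀ i j, A i j = A i.rev j.rev)
    {p : ℝ × ℝ} (hp : p ∈ stdFigure A) : rcPt r c p ∈ stdFigure A := by
  obtain ⟨i, j, t, ht0, ht1, hc⟩ := hp
  refine ⟨i.rev, j.rev, 1 - t, by linarith, by linarith, ?_⟩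
  have hA : A i.rev j.rev = A i j := (hsym i j).symm
  have hi := revCast i
  have hj := revCast j
  rcases hc with ⟨h1, hp⟩ | ⟨h1, hp⟩
  · left
    refine ⟨by rw [hA, h1], ?_⟩
    rw [hp]
    simp only [rcPt, Prod.mk.injEq]
    constructor
    · rw [hj]; ring
    · rw [hi]; ring
  · right
    refine ⟨by rw [hA, h1], ?_⟩
    rw [hp]
    simp only [rcPt, Prod.mk.injEq]
    constructor
    · rw [hj]; ring
    · rw [hi]; ring

lemma permApplyInvSelf {α : Type*} (f : Equiv.Perm α) (x : α) : f (f⁻¹ x) = x :=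
  Equiv.apply_symm_apply f x

lemma permInvApplySelf {α : Type*} (f : Equiv.Perm α) (x : α) : f⁻¹ (f x) = x :=
  Equiv.symm_apply_apply f x

lemma mainPart2 {r c n : ℕ} {A : Fin r → Fin c → ℤ}
    (hsym : ∀ i j, A i j = A i.rev j.rev)
    (π : Equiv.Perm (Fin n)) (hπ : InGeom A π) :
    ∃ ρ : Equiv.Perm (Fin (2 * n)), InGeom A ρ ∧ rcPerm ρ = ρ ∧ PermContains ρ π := by
  obtain ⟨p, hmem, hxm, hyiff⟩ := hπ
  simp only [stdFigure, Set.mem_setOf_eq] at hmem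
  choose I J T ht0 ht1 hcase using hmem
  set pow3 : Fin n → ℝ := fun k => ((3 ^ (k:ℕ) : ℕ) : ℝ) with hpow3
  have hpow3pos : ∀ k, 0 < pow3 k := fun k => by positivity
  have hpow3inj : ∀ k l : Fin n, k ≠ l → pow3 k ≠ pow3 l := by
    intro k l hkl h
    apply hkl
    simp only [hpow3] at h
    have h1 : (3:ℕ) ^ (k:ℕ) = 3 ^ (l:ℕ) := by exact_mod_cast h
    exact Fin.ext (Nat.pow_right_injective (by norm_num) h1)
  set Yf : Fin n → ℝ → ℝ :=
    fun k t => if A (I k) (J k) = 1 then (I k : ℝ) + t else (I k : ℝ) + 1 - t with hYf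
  have hP : ∀ k, p k = ((J k : ℝ) + T k, Yf k (T k)) := by
    intro k
    rcases hcase k with ⟨h1, h2⟩ | ⟨h1, h2⟩
    · rw [h2]; simp [hYf, h1]
    · have hne : A (I k) (J k) ≠ 1 := by rw [h1]; norm_num
      rw [h2]; simp [hYf, hne]
  set Vc : Fin n → ℝ := fun k => if A (I k) (J k) = 1 then pow3 k else -pow3 k with hVc
  have hshift : ∀ (k : Fin n) (ε : ℝ), Yf k (T k + ε * pow3 k) = Yf k (T k) + ε * Vc k := by
    intro k ε
    simp only [hYf, hVc]
    split <;> ring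
  have HA : ∀ᶠ ε in 𝓝[>] (0:ℝ), ∀ k : Fin n, 0 < T k + ε * pow3 k :=
    eventually_all.mpr fun k =>
      (evAffLt 0 0 (T k) (pow3 k) (ht0 k)).mono fun ε h => by linarith
  have HB : ∀ᶠ ε in 𝓝[>] (0:ℝ), ∀ k : Fin n, T k + ε * pow3 k < 1 :=
    eventually_all.mpr fun k =>
      (evAffLt (T k) (pow3 k) 1 0 (ht1 k)).mono fun ε h => by linarith
  have HC : ∀ᶠ ε in 𝓝[>] (0:ℝ), ∀ k l : Fin n, k < l →
      ((J k : ℝ) + (T k + ε * pow3 k)) < ((J l : ℝ) + (T l + ε * pow3 l)) := by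
    rw [eventually_all]; intro k; rw [eventually_all]; intro l
    by_cases hkl : k < l
    · have hx : (J k : ℝ) + T k < (J l : ℝ) + T l := by
        have hx0 := hxm hkl
        simp only at hx0
        rw [hP k, hP l] at hx0
        exact hx0
      exact (evAffLt ((J k : ℝ) + T k) (pow3 k) ((J l : ℝ) + T l) (pow3 l) hx).mono
        fun ε h _ => by linarith
    · exact Filter.Eventually.of_forall fun ε h => absurd h hkl
  have HD : ∀ᶠ ε in 𝓝[>] (0:ℝ), ∀ k l : Fin n, Yf k (T k) < Yf l (T l) →
      Yf k (T k) + ε * Vc k < Yf l (T l) + ε * Vc l := by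
    rw [eventually_all]; intro k; rw [eventually_all]; intro l
    by_cases hkl : Yf k (T k) < Yf l (T l)
    · exact (evAffLt _ (Vc k) _ (Vc l) hkl).mono fun ε h _ => h
    · exact Filter.Eventually.of_forall fun ε h => absurd h hkl
  have HE : ∀ᶠ ε in 𝓝[>] (0:ℝ), ∀ k l : Fin n, k ≠ l →
      T k + ε * pow3 k ≠ T l + ε * pow3 l := by
    rw [eventually_all]; intro k; rw [eventually_all]; intro l
    by_cases hkl : k = l
    · exact Filter.Eventually.of_forall fun ε h => absurd hkl h
    · exact (evAffNe (T k) (pow3 k) (T l) (pow3 l) (Or.inr (hpow3inj k l hkl))).mono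
        fun ε h _ => h
  have HF : ∀ᶠ ε in 𝓝[>] (0:ℝ), ∀ k l : Fin n,
      (T k + ε * pow3 k) + (T l + ε * pow3 l) ≠ 1 := by
    rw [eventually_all]; intro k; rw [eventually_all]; intro l
    have hne : pow3 k + pow3 l ≠ (0:ℝ) := by
      have := hpow3pos k; have := hpow3pos l; linarith
    refine (evAffNe (T k + T l) (pow3 k + pow3 l) 1 0 (Or.inr hne)).mono fun ε h heq => ?_
    apply h
    rw [mul_zero, add_zero]
    linarith [heq]
  obtain ⟨ε, h1, h2, h3, h4, h5, h6⟩ :=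
    (HA.and (HB.and (HC.and (HD.and (HE.and HF))))).exists
  set U : Fin n → ℝ := fun k => T k + ε * pow3 k with hUdef
  have hU0 : ∀ k, 0 < U k := h1
  have hU1 : ∀ k, U k < 1 := h2
  have hXm : StrictMono fun k : Fin n => (J k : ℝ) + U k := fun k l h => h3 k l h
  have hTne : ∀ k l : Fin n, k ≠ l → U k ≠ U l := h5
  have hTsum : ∀ k l : Fin n, U k + U l ≠ 1 := h6
  have hyiff' : ∀ k l : Fin n, Yf k (U k) < Yf l (U l) ↔ π k < π l := by
    have hmono : ∀ k l, π k < π l → Yf k (U k) < Yf l (U l) := by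
      intro k l h
      have h' : (p k).2 < (p l).2 := (hyiff k l).mpr h
      rw [hP k, hP l] at h'
      simp only at h'
      have h'' := h4 k l h'
      rw [← hshift, ← hshift] at h''
      simp only [hUdef]
      exact h''
    intro k l
    constructor
    · intro h
      rcases lt_trichotomy (π k) (π l) with hh | hh | hh
      · exact hh
      · exfalso
        have : k = l := π.injective hh
        subst this
        exact lt_irrefl _ h
      · exact absurd h (asymm (hmono l k hh))
    · exact hmono k l
  -- the doubled point configuration
  set Pt : Fin n → ℝ × ℝ := fun m => ((J m : ℝ) + U m, Yf m (U m)) with hPt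
  have hPt1 : ∀ m, (Pt m).1 = ((J m : ℕ) : ℝ) + U m := fun m => by simp only [hPt]
  have hPtY : ∀ m, (Pt m).2 = Yf m (U m) := fun m => by simp only [hPt]
  set Wv : Fin n → ℝ := fun m => if A (I m) (J m) = 1 then U m else 1 - U m with hWv
  have hW0 : ∀ m, 0 < Wv m := by
    intro m; simp only [hWv]; split
    · exact hU0 m
    · linarith [hU1 m]
  have hW1 : ∀ m, Wv m < 1 := by
    intro m; simp only [hWv]; split
    · exact hU1 m
    · linarith [hU0 m]
  have hPt2 : ∀ m, (Pt m).2 = ((I m : ℕ) : ℝ) + Wv m := by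
    intro m
    simp only [hPt, hYf, hWv]
    split <;> ring
  have hWne : ∀ m m' : Fin n, m ≠ m' → Wv m ≠ Wv m' := by
    intro m m' hmm
    simp only [hWv]
    split <;> split
    · exact hTne m m' hmm
    · intro h; exact hTsum m m' (by linarith)
    · intro h; exact hTsum m m' (by linarith)
    · intro h; exact hTne m m' hmm (by linarith)
  have hWsum : ∀ m m' : Fin n, Wv m + Wv m' ≠ 1 := by
    intro m m'
    by_cases hmm : m = m'
    · subst hmm
      simp only [hWv]
      split
      · exact hTsum m m
      · intro h; exact hTsum m m (by linarith)
    · simp only [hWv]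
      split <;> split
      · exact hTsum m m'
      · intro h; exact hTne m m' hmm (by linarith)
      · intro h; exact hTne m m' hmm (by linarith)
      · intro h; exact hTsum m m' (by linarith)
  have hPtmem : ∀ m, Pt m ∈ stdFigure A := by
    intro m
    refine ⟨I m, J m, U m, hU0 m, hU1 m, ?_⟩
    rcases hcase m with ⟨hA1, _⟩ | ⟨hA1, _⟩
    · left; exact ⟨hA1, by simp only [hPt, hYf, if_pos hA1]⟩
    · right
      have hne : A (I m) (J m) ≠ 1 := by rw [hA1]; norm_num
      exact ⟨hA1, by simp only [hPt, hYf, if_neg hne]⟩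
  set q : Fin (2 * n) → ℝ × ℝ := fun k =>
    if h : (k : ℕ) < n then Pt ⟨(k:ℕ), h⟩
    else rcPt r c (Pt ⟨(k:ℕ) - n, by have := k.isLt; omega⟩) with hq
  have hq1' : ∀ (k : Fin (2*n)) (h : (k:ℕ) < n) (m : Fin n), (m:ℕ) = (k:ℕ) → q k = Pt m := by
    intro k h m hm
    simp only [hq, dif_pos h]
    exact congrArg Pt (Fin.ext hm.symm)
  have hq2' : ∀ (k : Fin (2*n)) (h : ¬ (k:ℕ) < n) (m : Fin n), (m:ℕ) = (k:ℕ) - n →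
      q k = rcPt r c (Pt m) := by
    intro k h m hm
    simp only [hq, dif_neg h]
    exact congrArg (rcPt r c) (congrArg Pt (Fin.ext hm.symm))
  have hqcase : ∀ k : Fin (2*n),
      ((k:ℕ) < n ∧ ∃ m : Fin n, (m:ℕ) = (k:ℕ) ∧ q k = Pt m) ∨
      (¬ (k:ℕ) < n ∧ ∃ m : Fin n, (m:ℕ) = (k:ℕ) - n ∧ q k = rcPt r c (Pt m)) := by
    intro k
    by_cases h : (k:ℕ) < n
    · exact Or.inl ⟨h, ⟨(k:ℕ), h⟩, rfl, hq1' k h _ rfl⟩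
    · exact Or.inr ⟨h, ⟨(k:ℕ) - n, by have := k.isLt; omega⟩, rfl, hq2' k h _ rfl⟩
  have hrc1 : ∀ m, (rcPt r c (Pt m)).1 = (((J m).rev : ℕ) : ℝ) + (1 - U m) := by
    intro m
    rw [show (rcPt r c (Pt m)).1 = (c:ℝ) - (Pt m).1 from rfl, hPt1 m, revCast]
    ring
  have hrc2 : ∀ m, (rcPt r c (Pt m)).2 = (((I m).rev : ℕ) : ℝ) + (1 - Wv m) := by
    intro m
    rw [show (rcPt r c (Pt m)).2 = (r:ℝ) - (Pt m).2 from rfl, hPt2 m, revCast]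
    ring
  have hxinj : Function.Injective fun k : Fin (2*n) => (q k).1 := by
    intro k l hkl
    simp only at hkl
    by_contra hne
    have hvne : (k:ℕ) ≠ (l:ℕ) := fun h => hne (Fin.ext h)
    rcases hqcase k with ⟨hk, mk, hmk, hqk⟩ | ⟨hk, mk, hmk, hqk⟩ <;>
      rcases hqcase l with ⟨hl, ml, hml, hql⟩ | ⟨hl, ml, hml, hql⟩
    · rw [hqk, hql, hPt1, hPt1] at hkl
      obtain ⟨_, hu⟩ := fracEq _ _ _ _ (hU0 mk) (hU1 mk) (hU0 ml) (hU1 ml) hkl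
      exact hTne mk ml (fun h => hvne (by have hh := congrArg Fin.val h; omega)) hu
    · rw [hqk, hql, hPt1, hrc1] at hkl
      obtain ⟨_, hu⟩ := fracEq _ _ _ _ (hU0 mk) (hU1 mk)
        (by linarith [hU1 ml]) (by linarith [hU0 ml]) hkl
      exact hTsum mk ml (by linarith)
    · rw [hqk, hql, hrc1, hPt1] at hkl
      obtain ⟨_, hu⟩ := fracEq _ _ _ _ (by linarith [hU1 mk]) (by linarith [hU0 mk])
        (hU0 ml) (hU1 ml) hkl
      exact hTsum mk ml (by linarith)
    · rw [hqk, hql, hrc1, hrc1] at hkl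
      obtain ⟨_, hu⟩ := fracEq _ _ _ _ (by linarith [hU1 mk]) (by linarith [hU0 mk])
        (by linarith [hU1 ml]) (by linarith [hU0 ml]) hkl
      have huu : U mk = U ml := by linarith
      exact hTne mk ml (fun h => hvne (by have hh := congrArg Fin.val h; omega)) huu
  have hyinj : Function.Injective fun k : Fin (2*n) => (q k).2 := by
    intro k l hkl
    simp only at hkl
    by_contra hne
    have hvne : (k:ℕ) ≠ (l:ℕ) := fun h => hne (Fin.ext h)
    rcases hqcase k with ⟨hk, mk, hmk, hqk⟩ | ⟨hk, mk, hmk, hqk⟩ <;>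
      rcases hqcase l with ⟨hl, ml, hml, hql⟩ | ⟨hl, ml, hml, hql⟩
    · rw [hqk, hql, hPt2, hPt2] at hkl
      obtain ⟨_, hu⟩ := fracEq _ _ _ _ (hW0 mk) (hW1 mk) (hW0 ml) (hW1 ml) hkl
      exact hWne mk ml (fun h => hvne (by have hh := congrArg Fin.val h; omega)) hu
    · rw [hqk, hql, hPt2, hrc2] at hkl
      obtain ⟨_, hu⟩ := fracEq _ _ _ _ (hW0 mk) (hW1 mk)
        (by linarith [hW1 ml]) (by linarith [hW0 ml]) hkl
      exact hWsum mk ml (by linarith)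
    · rw [hqk, hql, hrc2, hPt2] at hkl
      obtain ⟨_, hu⟩ := fracEq _ _ _ _ (by linarith [hW1 mk]) (by linarith [hW0 mk])
        (hW0 ml) (hW1 ml) hkl
      exact hWsum mk ml (by linarith)
    · rw [hqk, hql, hrc2, hrc2] at hkl
      obtain ⟨_, hu⟩ := fracEq _ _ _ _ (by linarith [hW1 mk]) (by linarith [hW0 mk])
        (by linarith [hW1 ml]) (by linarith [hW0 ml]) hkl
      have huu : Wv mk = Wv ml := by linarith
      exact hWne mk ml (fun h => hvne (by have hh := congrArg Fin.val h; omega)) huu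
  have hqmem : ∀ k, q k ∈ stdFigure A := by
    intro k
    rcases hqcase k with ⟨_, m, _, hqk⟩ | ⟨_, m, _, hqk⟩
    · rw [hqk]; exact hPtmem m
    · rw [hqk]; exact rcPt_mem hsym (hPtmem m)
  obtain ⟨ρ0, e, hXs, hYs⟩ := existsSorted q hxinj hyinj
  have hEinv : ∀ a b : Fin (2*n), e⁻¹ a < e⁻¹ b ↔ (q a).1 < (q b).1 := by
    intro a b
    rw [← hXs.lt_iff_lt]
    simp [permApplyInvSelf]
  -- embedding of the original points
  have hembex : ∀ m : Fin n, ∃ k : Fin (2*n), (k:ℕ) = (m:ℕ) ∧ q k = Pt m := by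
    intro m
    refine ⟨⟨(m:ℕ), by have := m.isLt; omega⟩, rfl, ?_⟩
    exact hq1' _ m.isLt m rfl
  choose emb hembv hembq using hembex
  -- involution on indices
  set wf : Fin (2*n) → Fin (2*n) := fun k =>
    if h : (k:ℕ) < n then ⟨(k:ℕ) + n, by omega⟩
    else ⟨(k:ℕ) - n, by have := k.isLt; omega⟩ with hwf
  have hwfval : ∀ k : Fin (2*n), (wf k : ℕ) = if (k:ℕ) < n then (k:ℕ) + n else (k:ℕ) - n := by
    intro k
    by_cases h : (k:ℕ) < n
    · simp only [hwf, dif_pos h, if_pos h]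
    · simp only [hwf, dif_neg h, if_neg h]
  have hwinv : Function.Involutive wf := by
    intro k
    apply Fin.ext
    rw [hwfval, hwfval]
    have := k.isLt
    split_ifs <;> omega
  have hqw : ∀ k : Fin (2*n), q (wf k) = rcPt r c (q k) := by
    intro k
    by_cases h : (k:ℕ) < n
    · have hv : ((wf k):ℕ) = (k:ℕ) + n := by rw [hwfval, if_pos h]
      have h2 : ¬ ((wf k):ℕ) < n := by omega
      obtain ⟨m0, hm0⟩ : ∃ m : Fin n, (m:ℕ) = (k:ℕ) := ⟨⟨(k:ℕ), h⟩, rfl⟩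
      rw [hq2' (wf k) h2 m0 (by omega), hq1' k h m0 hm0]
    · have hv : ((wf k):ℕ) = (k:ℕ) - n := by rw [hwfval, if_neg h]
      have h2 : ((wf k):ℕ) < n := by have := k.isLt; omega
      obtain ⟨m0, hm0⟩ : ∃ m : Fin n, (m:ℕ) = (k:ℕ) - n :=
        ⟨⟨(k:ℕ) - n, by have := k.isLt; omega⟩, rfl⟩
      rw [hq1' (wf k) h2 m0 (by omega), hq2' k h m0 hm0, rcPt_invol]
  set wp : Equiv.Perm (Fin (2*n)) := Function.Involutive.toPerm wf hwinv with hwp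
  have hwpapp : ∀ k, wp k = wf k := fun k => rfl
  have hganti : ∀ m m' : Fin (2*n), m < m' → e⁻¹ (wp (e m')) < e⁻¹ (wp (e m)) := by
    intro m m' hmm
    apply (hEinv _ _).mpr
    rw [hwpapp, hwpapp, hqw, hqw]
    simp only [rcPt]
    have hx0 := hXs hmm
    simp only at hx0
    linarith
  set gp : Equiv.Perm (Fin (2*n)) := ((e.trans wp).trans e⁻¹).trans (Fin.revPerm) with hgp
  have hgpapp : ∀ m, gp m = (e⁻¹ (wp (e m))).rev := fun m => rfl
  have hgmono : StrictMono ⇑gp := by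
    intro m m' hmm
    rw [hgpapp, hgpapp, Fin.rev_lt_rev]
    exact hganti m m' hmm
  have hgid := permStrictMono_eq_id gp hgmono
  have hgrev : ∀ m : Fin (2*n), e⁻¹ (wp (e m)) = m.rev := by
    intro m
    have hg1 := hgid m
    rw [hgpapp] at hg1
    have hg2 := congrArg Fin.rev hg1
    rwa [Fin.rev_rev] at hg2
  have hYrev : ∀ m : Fin (2*n), (q (e m.rev)).2 = (r:ℝ) - (q (e m)).2 := by
    intro m
    rw [← hgrev m, permApplyInvSelf, hwpapp, hqw]
    rfl
  have hcs : rcPerm ρ0 = ρ0 := by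
    have hh : ∀ m m' : Fin (2*n), ρ0 m < ρ0 m' → (rcPerm ρ0) m < (rcPerm ρ0) m' := by
      intro m m' h
      rw [rcPerm_apply, rcPerm_apply, Fin.rev_lt_rev, ← hYs m'.rev m.rev, hYrev, hYrev]
      have hlt := (hYs m m').mpr h
      linarith
    set σ2 : Equiv.Perm (Fin (2*n)) := (ρ0⁻¹ : Equiv.Perm (Fin (2*n))).trans (rcPerm ρ0) with hσ2
    have hσ2app : ∀ a, σ2 a = (rcPerm ρ0) (ρ0⁻¹ a) := fun a => rfl
    have hmono2 : StrictMono ⇑σ2 := by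
      intro a b hab
      rw [hσ2app, hσ2app]
      apply hh
      rwa [permApplyInvSelf, permApplyInvSelf]
    have hid := permStrictMono_eq_id σ2 hmono2
    ext x
    have hfin := hid (ρ0 x)
    rw [hσ2app] at hfin
    rw [permInvApplySelf] at hfin
    exact congrArg Fin.val hfin
  refine ⟨ρ0, ⟨fun k => q (e k), fun k => hqmem _, hXs, hYs⟩, hcs, ?_⟩
  refine ⟨fun m => e⁻¹ (emb m), ?_, ?_⟩
  · intro a b hab
    apply (hEinv _ _).mpr
    rw [hembq, hembq, hPt1, hPt1]
    exact hXm hab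
  · intro i j
    have h := hYs (e⁻¹ (emb i)) (e⁻¹ (emb j))
    rw [permApplyInvSelf, permApplyInvSelf, hembq, hembq] at h
    rw [hPtY, hPtY] at h
    exact (hyiff' i j).symm.trans h

lemma rcPerm_invol {n : ℕ} (π : Equiv.Perm (Fin n)) : rcPerm (rcPerm π) = π := by
  ext k
  simp [rcPerm_apply, Fin.rev_rev]


lemma inGeom_rc {r c n : ℕ} {A : Fin r → Fin c → ℤ} (hsym : ∀ i j, A i j = A i.rev j.rev)
    {π : Equiv.Perm (Fin n)} (h : InGeom A π) : InGeom A (rcPerm π) := by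
  obtain ⟨p, hmem, hx, hy⟩ := h
  refine ⟨fun k => rcPt r c (p k.rev), fun k => rcPt_mem hsym (hmem _), ?_, ?_⟩
  · intro k l hkl
    have : (p l.rev).1 < (p k.rev).1 := hx (Fin.rev_lt_rev.mpr hkl)
    simp only [rcPt]
    linarith
  · intro k l
    simp only [rcPt]
    rw [sub_lt_sub_iff_left, hy, rcPerm_apply, rcPerm_apply, Fin.rev_lt_rev]


theorem stmt6 (r c : ℕ) (A : Fin r → Fin c → ℤ)
    (hentries : ∀ i j, A i j = 0 ∨ A i j = 1 ∨ A i j = -1)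
    (hsym : ∀ i j, A i j = A i.rev j.rev) :
    (∀ (n : ℕ) (π : Equiv.Perm (Fin n)), InGeom A π ↔ InGeom A (rcPerm π)) ∧
    (∀ (n : ℕ) (π : Equiv.Perm (Fin n)), InGeom A π →
      ∃ ρ : Equiv.Perm (Fin (2 * n)), InGeom A ρ ∧ rcPerm ρ = ρ ∧ PermContains ρ π) := by
  constructor
  · intro n π
    constructor
    · exact fun h => inGeom_rc hsym h
    · intro h
      have h2 := inGeom_rc hsym h
      rwa [rcPerm_invol] at h2
  · intro n π hπ
    exact mainPart2 hsym π hπ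
end

section
/- If C is a sum closed, rc-invariant permutation class, then for every n ≥ 0 the map σ ↦ rc(σ) ⊕ σ is an injection from C_n into C^rc_{2n}; in particular |C_n| ≤ |C^rc_{2n}|. -/
open Filter Topology

/-- The direct sum `σ ⊕ τ` of two permutations. -/
def sumPerm {a b : ℕ} (σ : Equiv.Perm (Fin a)) (τ : Equiv.Perm (Fin b)) :
    Equiv.Perm (Fin (a + b)) :=
  (finSumFinEquiv.symm.trans (Equiv.sumCongr σ τ)).trans finSumFinEquiv

/-- A class is sum closed if it is closed under `⊕`. -/
def SumClosed (C : ∀ n : ℕ, Set (Equiv.Perm (Fin n))) : Prop :=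
  ∀ (a b : ℕ) (σ : Equiv.Perm (Fin a)) (τ : Equiv.Perm (Fin b)),
    σ ∈ C a → τ ∈ C b → sumPerm σ τ ∈ C (a + b)

/-- Transport a permutation along an equality of sizes. -/
def permCast {m n : ℕ} (h : m = n) (π : Equiv.Perm (Fin m)) : Equiv.Perm (Fin n) :=
  ((finCongr h).symm.trans π).trans (finCongr h)

/-- A permutation is sum-indecomposable if it is not the sum of two permutations of
nonzero size. -/
def SumIndecomposable {n : ℕ} (π : Equiv.Perm (Fin n)) : Prop :=
  ¬ ∃ (a b : ℕ) (σ : Equiv.Perm (Fin a)) (τ : Equiv.Perm (Fin b)) (h : a + b = n),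
      0 < a ∧ 0 < b ∧ π = permCast h (sumPerm σ τ)

/-- `|ind(C)_n|`, the number of sum-indecomposable permutations of size `n` in `C`. -/
noncomputable def indCount (C : ∀ n : ℕ, Set (Equiv.Perm (Fin n))) (n : ℕ) : ℕ :=
  {π ∈ C n | SumIndecomposable π}.ncard

/-- `|ind(C)^rc_{2k}|`, the number of centrosymmetric sum-indecomposable permutations of
size `2k` in `C`. -/
noncomputable def indRcCount (C : ∀ n : ℕ, Set (Equiv.Perm (Fin n))) (k : ℕ) : ℕ :=
  {π ∈ C (2 * k) | SumIndecomposable π ∧ rcPerm π = π}.ncard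



lemma sumPerm_apply_castAdd {a b : ℕ} (σ : Equiv.Perm (Fin a)) (τ : Equiv.Perm (Fin b))
    (i : Fin a) : sumPerm σ τ (Fin.castAdd b i) = Fin.castAdd b (σ i) := by
  simp [sumPerm, finSumFinEquiv_symm_apply_castAdd]

lemma sumPerm_apply_natAdd {a b : ℕ} (σ : Equiv.Perm (Fin a)) (τ : Equiv.Perm (Fin b))
    (i : Fin b) : sumPerm σ τ (Fin.natAdd a i) = Fin.natAdd a (τ i) := by
  simp [sumPerm, finSumFinEquiv_symm_apply_natAdd]

lemma rcPerm_apply_s10 {m : ℕ} (π : Equiv.Perm (Fin m)) (i : Fin m) :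
    rcPerm π i = Fin.rev (π (Fin.rev i)) := by
  simp [rcPerm]

lemma rev_castAdd' {a : ℕ} (j : Fin a) :
    Fin.rev (Fin.castAdd a j) = Fin.natAdd a (Fin.rev j) :=
  Fin.ext (by have := j.isLt; simp [Fin.rev]; omega)

lemma rev_natAdd' {a : ℕ} (j : Fin a) :
    Fin.rev (Fin.natAdd a j) = Fin.castAdd a (Fin.rev j) :=
  Fin.ext (by have := j.isLt; simp [Fin.rev]; omega)

lemma rcPerm_rcPerm {m : ℕ} (π : Equiv.Perm (Fin m)) : rcPerm (rcPerm π) = π := by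
  ext i
  simp [rcPerm]

lemma permCast_rfl {m : ℕ} (π : Equiv.Perm (Fin m)) : permCast rfl π = π := by
  ext i; simp [permCast]

lemma rcPerm_permCast {m k : ℕ} (h : m = k) (π : Equiv.Perm (Fin m)) :
    rcPerm (permCast h π) = permCast h (rcPerm π) := by
  subst h; rw [permCast_rfl, permCast_rfl]

lemma permCast_inj {m k : ℕ} (h : m = k) (π ρ : Equiv.Perm (Fin m))
    (he : permCast h π = permCast h ρ) : π = ρ := by
  subst h; rwa [permCast_rfl, permCast_rfl] at he

lemma rcPerm_sumPerm_self {a : ℕ} (σ τ : Equiv.Perm (Fin a)) :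
    rcPerm (sumPerm σ τ) = sumPerm (rcPerm τ) (rcPerm σ) := by
  refine Equiv.ext fun i => ?_
  induction i using Fin.addCases with
  | left j =>
      rw [rcPerm_apply_s10, rev_castAdd', sumPerm_apply_natAdd, rev_natAdd',
        sumPerm_apply_castAdd, rcPerm_apply_s10]
  | right j =>
      rw [rcPerm_apply_s10, rev_natAdd', sumPerm_apply_castAdd, rev_castAdd',
        sumPerm_apply_natAdd, rcPerm_apply_s10]

lemma permCast_mem (C : ∀ n : ℕ, Set (Equiv.Perm (Fin n)))
    {m k : ℕ} (h : m = k) (π : Equiv.Perm (Fin m)) (hπ : π ∈ C m) :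
    permCast h π ∈ C k := by
  subst h; rwa [permCast_rfl]

theorem stmt10 (C : ∀ n : ℕ, Set (Equiv.Perm (Fin n))) (hC : IsPermClass C)
    (hsum : SumClosed C) (hrc : RCInvariant C) (n : ℕ) :
    Set.InjOn (fun σ : Equiv.Perm (Fin n) =>
        permCast (two_mul n).symm (sumPerm (rcPerm σ) σ)) (C n) ∧
    (∀ σ ∈ C n, permCast (two_mul n).symm (sumPerm (rcPerm σ) σ) ∈
        {π ∈ C (2 * n) | rcPerm π = π}) ∧
    classCount C n ≤ rcCount C n := by
  have key : ∀ σ ∈ C n, permCast (two_mul n).symm (sumPerm (rcPerm σ) σ) ∈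
      {π ∈ C (2 * n) | rcPerm π = π} := by
    intro σ hσ
    constructor
    · apply permCast_mem C
      apply hsum
      · rw [← hrc n]; exact ⟨σ, hσ, rfl⟩
      · exact hσ
    · rw [rcPerm_permCast, rcPerm_sumPerm_self, rcPerm_rcPerm]
  have inj : Set.InjOn (fun σ : Equiv.Perm (Fin n) =>
      permCast (two_mul n).symm (sumPerm (rcPerm σ) σ)) (C n) := by
    intro σ _ τ _ he
    have h2 := permCast_inj _ _ _ he
    ext i
    have h3 := congrArg (fun p : Equiv.Perm (Fin (n + n)) => p (Fin.natAdd n i)) h2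
    simp only [sumPerm_apply_natAdd] at h3
    have h4 := congrArg Fin.val h3
    simp only [Fin.coe_natAdd] at h4
    omega
  refine ⟨inj, key, ?_⟩
  exact Set.ncard_le_ncard_of_injOn _ key inj (Set.toFinite _)
end
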